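/- (Theorem 3, part iii) Let γ ∈ (0,1) and consider sequences x_k ∈ ℝ^{np}, y_k ∈ ℝ^{nm} satisfying, for every k ≥ 0, A x_{k+1} = A x_k − γ(A x_k + 𝐋 y_{k+1} − d). If the coupled equality constraint holds at some k₀ ≥ 1, i.e., Σ_{i=1}^n A_i x_{i,k₀} = Σ_{i=1}^n d_i, then it remains satisfied thereafter: Σ_{i=1}^n A_i x_{i,k} = Σ_{i=1}^n d_i for all k ≥ k₀ (anytime feasibility of Eq-DanyRA). -/

import Mathlib

set_option autoImplicit false

open scoped BigOperators

noncomputable section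

/-- Block-diagonal action `A x` of the stacked matrix `A = blkdiag(A_1,…,A_n)`. -/
def Amul {n m p : ℕ} (A : Fin n → Matrix (Fin m) (Fin p) ℝ)
    (x : EuclideanSpace ℝ (Fin n × Fin p)) : EuclideanSpace ℝ (Fin n × Fin m) :=
  WithLp.toLp 2 fun q : Fin n × Fin m => ∑ k : Fin p, A q.1 q.2 k * x (q.1, k)

/-- Action of `𝐋 = 𝓛 ⊗ I_m` on a stacked vector `u ∈ ℝ^{nm}`. -/
def Lmul {n m : ℕ} (L : Matrix (Fin n) (Fin n) ℝ)
    (u : EuclideanSpace ℝ (Fin n × Fin m)) : EuclideanSpace ℝ (Fin n × Fin m) :=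
  WithLp.toLp 2 fun q : Fin n × Fin m => ∑ l : Fin n, L q.1 l * u (l, q.2)

/-- Theorem 3, part iii: under the Eq-DanyRA decision-update
constraint `A x_{k+1} = A x_k − γ(A x_k + 𝐋 y_{k+1} − d)` with `γ ∈ (0,1)`, if
the coupled equality constraint `∑ᵢ Aᵢ x_{i,k₀} = ∑ᵢ dᵢ` holds at some
`k₀ ≥ 1`, then it remains satisfied thereafter:
`∑ᵢ Aᵢ x_{i,k} = ∑ᵢ dᵢ` for all `k ≥ k₀` (anytime feasibility). -/
theorem stmt_19 {n m p : ℕ} (hn : 1 ≤ n)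
    (A : Fin n → Matrix (Fin m) (Fin p) ℝ)
    (d : EuclideanSpace ℝ (Fin n × Fin m))
    (L : Matrix (Fin n) (Fin n) ℝ)
    (hLsym : L.IsSymm)
    (hLrow : ∀ i, ∑ j, L i j = 0)
    (hLcol : ∀ j, ∑ i, L i j = 0)
    (γ : ℝ) (hγ0 : 0 < γ) (hγ1 : γ < 1)
    (x : ℕ → EuclideanSpace ℝ (Fin n × Fin p))
    (y : ℕ → EuclideanSpace ℝ (Fin n × Fin m))
    (hrec : ∀ k : ℕ, Amul A (x (k + 1)) =
      Amul A (x k) - γ • (Amul A (x k) + Lmul L (y (k + 1)) - d))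
    (k₀ : ℕ) (hk₀ : 1 ≤ k₀)
    (hfeas : ∀ j : Fin m,
      (∑ i : Fin n, Amul A (x k₀) (i, j)) = ∑ i : Fin n, d (i, j)) :
    ∀ k : ℕ, k₀ ≤ k → ∀ j : Fin m,
      (∑ i : Fin n, Amul A (x k) (i, j)) = ∑ i : Fin n, d (i, j) := by
  intro k hk
  induction k with
  | zero => simpa [Nat.le_zero.mp hk] using hfeas
  | succ k ih =>
    rcases Nat.lt_or_ge k₀ (k+1) with h | h
    · have hkk : k₀ ≤ k := Nat.lt_succ_iff.mp h
      have ihk := ih hkk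
      intro j
      have hL : (∑ i : Fin n, Lmul L (y (k+1)) (i, j)) = 0 := by
        simp only [Lmul, PiLp.toLp_apply]
        rw [Finset.sum_comm]
        simp [← Finset.sum_mul, hLcol]
      have := hrec k
      have hpt : ∀ i : Fin n, Amul A (x (k+1)) (i, j) =
          Amul A (x k) (i, j) - γ * (Amul A (x k) (i, j) + Lmul L (y (k+1)) (i, j) - d (i, j)) := by
        intro i
        have := congrArg (fun v => v (i, j)) this
        simpa [sub_eq_iff_eq_add] using this
      calc (∑ i : Fin n, Amul A (x (k+1)) (i, j))
          = ∑ i : Fin n, (Amul A (x k) (i, j)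
              - γ * (Amul A (x k) (i, j) + Lmul L (y (k+1)) (i, j) - d (i, j))) := by
            exact Finset.sum_congr rfl fun i _ => hpt i
        _ = ∑ i : Fin n, d (i, j) := by
            simp only [Finset.sum_sub_distrib, ← Finset.mul_sum, Finset.sum_add_distrib,
              ihk j, hL]
            ring
    · have : k₀ = k + 1 := le_antisymm hk h
      simpa [← this] using hfeas
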